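/- Let α₁, α₂, β₁, β₂ be homogeneous polynomials of degree 2 in ℂ[z,w], and let a, b ∈ ℂ with a ≠ 0. Suppose α₁w = β₁z, α₂(az+bw) = β₂w, and α₁(az+bw) + α₂w = β₂z + β₁w. Then there exists a linear form u ∈ ℂ[z,w]₁ with α₁ = uz, β₁ = uw, α₂ = uw, and β₂ = u(az+bw). -/

import Mathlib

open MvPolynomial

local notation "z" => (X 0 : MvPolynomial (Fin 2) ℂ)
local notation "w" => (X 1 : MvPolynomial (Fin 2) ℂ)

lemma prime_z : Prime (X 0 : MvPolynomial (Fin 2) ℂ) := by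
  rw [← MulEquiv.prime_iff (finSuccEquiv ℂ 1).toMulEquiv]
  have : (finSuccEquiv ℂ 1) (X 0) = Polynomial.X := finSuccEquiv_X_zero
  rw [show ((finSuccEquiv ℂ 1).toMulEquiv (X 0)) = Polynomial.X from this]
  exact Polynomial.prime_X

lemma z_not_dvd_w : ¬ (X 0 : MvPolynomial (Fin 2) ℂ) ∣ X 1 := by
  intro ⟨q, hq⟩
  have := congrArg (eval (fun i : Fin 2 => if i = 0 then 0 else 1)) hq
  simp at this

/-- Case 1 of Proposition 4: from the three determinant relations, all entries of the
first column factor through a single common linear form `u`. -/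
theorem stmt_5 (α₁ α₂ β₁ β₂ : MvPolynomial (Fin 2) ℂ)
    (hα₁ : α₁.IsHomogeneous 2) (hα₂ : α₂.IsHomogeneous 2)
    (hβ₁ : β₁.IsHomogeneous 2) (hβ₂ : β₂.IsHomogeneous 2)
    (a b : ℂ) (ha : a ≠ 0)
    (h1 : α₁ * w = β₁ * z)
    (h2 : α₂ * (C a * z + C b * w) = β₂ * w)
    (h3 : α₁ * (C a * z + C b * w) + α₂ * w = β₂ * z + β₁ * w) :
    ∃ u : MvPolynomial (Fin 2) ℂ, u.IsHomogeneous 1 ∧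
      α₁ = u * z ∧ β₁ = u * w ∧ α₂ = u * w ∧ β₂ = u * (C a * z + C b * w) := by
  have hz0 : (X 0 : MvPolynomial (Fin 2) ℂ) ≠ 0 := X_ne_zero 0
  have hw0 : (X 1 : MvPolynomial (Fin 2) ℂ) ≠ 0 := X_ne_zero 1
  -- z divides α₁
  have hdvd : (X 0 : MvPolynomial (Fin 2) ℂ) ∣ α₁ := by
    have : (X 0 : MvPolynomial (Fin 2) ℂ) ∣ α₁ * X 1 := ⟨β₁, by rw [h1]; ring⟩
    rcases prime_z.dvd_mul.mp this with h | h
    · exact h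
    · exact absurd h z_not_dvd_w
  obtain ⟨u, hu⟩ := hdvd
  have hA : α₁ = u * z := by rw [hu]; ring
  -- u is homogeneous of degree 1
  have huh : u.IsHomogeneous 1 := by
    intro d hd
    have h2' : (Finsupp.weight 1) (d + Finsupp.single 0 1) = 2 := by
      apply hα₁
      rw [hA, coeff_mul_X]
      exact hd
    rw [map_add] at h2'
    have hsing : (Finsupp.weight (1 : Fin 2 → ℕ)) (Finsupp.single 0 1) = 1 := by
      simp [Finsupp.weight_apply, Finsupp.sum_single_index]
    rw [hsing] at h2'
    omega
  -- β₁ = u * w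
  have hB1 : β₁ = u * w := by
    apply mul_left_cancel₀ hz0
    linear_combination -h1 + (X 1 : MvPolynomial (Fin 2) ℂ) * hA
  -- q ≠ 0
  set q : MvPolynomial (Fin 2) ℂ := w * w - z * (C a * z + C b * w) with hqdef
  have hq0 : q ≠ 0 := by
    intro hq
    apply ha
    have := congrArg (eval (fun i : Fin 2 => if i = 0 then 1 else 0)) hq
    simpa [hqdef] using this.symm
  -- α₂ = u * w
  have hA2 : α₂ = u * w := by
    have key : (α₂ - u * w) * q = 0 := by
      rw [hqdef]
      rw [hA, hB1] at h3
      linear_combination (X 1 : MvPolynomial (Fin 2) ℂ) * h3 -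
        (X 0 : MvPolynomial (Fin 2) ℂ) * h2
    rcases mul_eq_zero.mp key with h | h
    · exact sub_eq_zero.mp h
    · exact absurd h hq0
  -- β₂
  have hB2 : β₂ = u * (C a * z + C b * w) := by
    apply mul_right_cancel₀ hw0
    linear_combination -h2 + (C a * z + C b * w) * hA2
  exact ⟨u, huh, hA, hB1, hA2, hB2⟩
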